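/- Let C be a 2-identifying code in the hexagonal grid G_H and let c ∈ C be a codeword all three of whose neighbors belong to C. Then s_2(C;c) ≤ 67/20. -/

import Mathlib

def hexGraph : SimpleGraph (ℤ × ℤ) where
  Adj u v := (u.2 = v.2 ∧ (u.1 = v.1 + 1 ∨ u.1 = v.1 - 1)) ∨
    (u.1 = v.1 ∧ (((u.1 + u.2) % 2 = 0 ∧ u.2 = v.2 - 1) ∨ ((u.1 + u.2) % 2 ≠ 0 ∧ u.2 = v.2 + 1)))
  symm := by constructor; rintro ⟨a, b⟩ ⟨c, d⟩ h; dsimp only at *; omega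
  loopless := by constructor; rintro ⟨a, b⟩ h; dsimp only at h; omega

def hexBall (r : ℕ) (u : ℤ × ℤ) : Set (ℤ × ℤ) := {x | hexGraph.dist u x ≤ r}

def I2 (C : Set (ℤ × ℤ)) (u : ℤ × ℤ) : Set (ℤ × ℤ) := hexBall 2 u ∩ C

def isIdentifying2 (C : Set (ℤ × ℤ)) : Prop :=
  ∀ u : ℤ × ℤ, (I2 C u).Nonempty ∧ ∀ v : ℤ × ℤ, u ≠ v → I2 C u ≠ I2 C v

noncomputable def share2 (C : Set (ℤ × ℤ)) (c : ℤ × ℤ) : ℝ :=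
  ∑' u : (hexBall 2 c), 1 / ((I2 C ↑u).ncard : ℝ)

def Q (n : ℕ) : Set (ℤ × ℤ) := {p | |p.1| ≤ (n : ℤ) ∧ |p.2| ≤ (n : ℤ)}

noncomputable def density (C : Set (ℤ × ℤ)) : ℝ :=
  Filter.limsup (fun n : ℕ => ((C ∩ Q n).ncard : ℝ) / ((Q n).ncard : ℝ)) Filter.atTop

lemma hexAdj (u v : ℤ × ℤ) : hexGraph.Adj u v ↔
    ((u.2 = v.2 ∧ (u.1 = v.1 + 1 ∨ u.1 = v.1 - 1)) ∨
    (u.1 = v.1 ∧ (((u.1 + u.2) % 2 = 0 ∧ u.2 = v.2 - 1) ∨ ((u.1 + u.2) % 2 ≠ 0 ∧ u.2 = v.2 + 1)))) :=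
  Iff.rfl

lemma hex_reach_aux : ∀ n : ℕ, ∀ u v : ℤ × ℤ,
    3 * (u.2 - v.2).natAbs + (u.1 - v.1).natAbs ≤ n → hexGraph.Reachable u v := by
  intro n
  induction n with
  | zero =>
    rintro ⟨a, b⟩ ⟨c, d⟩ h
    have h1 : a = c ∧ b = d := by simp at h; omega
    rw [h1.1, h1.2]
  | succ n ih =>
    rintro ⟨a, b⟩ ⟨c, d⟩ h
    by_cases hac : a = c
    · by_cases hbd : b = d
      · subst hac; subst hbd; exact SimpleGraph.Reachable.refl _
      · by_cases hp : (a + b) % 2 = 0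
        · by_cases hdb : b < d
          · exact (SimpleGraph.Adj.reachable ((hexAdj (a,b) (a,b+1)).mpr (by omega))).trans
              (ih (a, b+1) (c, d) (by simp at h ⊢; omega))
          · exact (SimpleGraph.Adj.reachable ((hexAdj (a,b) (a+1,b)).mpr (by omega))).trans
              (((SimpleGraph.Adj.reachable ((hexAdj (a+1,b) (a+1,b-1)).mpr (by omega)))).trans
                (ih (a+1, b-1) (c, d) (by simp at h ⊢; omega)))
        · by_cases hdb : d < b
          · exact (SimpleGraph.Adj.reachable ((hexAdj (a,b) (a,b-1)).mpr (by omega))).trans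
              (ih (a, b-1) (c, d) (by simp at h ⊢; omega))
          · exact (SimpleGraph.Adj.reachable ((hexAdj (a,b) (a+1,b)).mpr (by omega))).trans
              (((SimpleGraph.Adj.reachable ((hexAdj (a+1,b) (a+1,b+1)).mpr (by omega)))).trans
                (ih (a+1, b+1) (c, d) (by simp at h ⊢; omega)))
    · by_cases hlt : a < c
      · exact (SimpleGraph.Adj.reachable ((hexAdj (a,b) (a+1,b)).mpr (by omega))).trans
          (ih (a+1, b) (c, d) (by simp at h ⊢; omega))
      · exact (SimpleGraph.Adj.reachable ((hexAdj (a,b) (a-1,b)).mpr (by omega))).trans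
          (ih (a-1, b) (c, d) (by simp at h ⊢; omega))

lemma hex_reachable (u v : ℤ × ℤ) : hexGraph.Reachable u v :=
  hex_reach_aux _ u v le_rfl

lemma mem_hexBall2 (u v : ℤ × ℤ) : v ∈ hexBall 2 u ↔
    (u = v ∨ hexGraph.Adj u v ∨ ∃ w, hexGraph.Adj u w ∧ hexGraph.Adj w v) := by
  constructor
  · intro h
    obtain ⟨p, hp⟩ := (hex_reachable u v).exists_walk_length_eq_dist
    have hlen : p.length ≤ 2 := by rw [hp]; exact h
    cases p with
    | nil => exact Or.inl rfl
    | cons h1 q =>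
      cases q with
      | nil => exact Or.inr (Or.inl h1)
      | cons h2 r =>
        cases r with
        | nil => exact Or.inr (Or.inr ⟨_, h1, h2⟩)
        | cons h3 s => simp [SimpleGraph.Walk.length_cons] at hlen
  · rintro (rfl | h | ⟨w, h1, h2⟩)
    · simp [hexBall, SimpleGraph.dist_self]
    · have : hexGraph.dist u v ≤ 1 := by
        simpa using SimpleGraph.dist_le (SimpleGraph.Walk.cons h SimpleGraph.Walk.nil)
      exact le_trans this (by norm_num)
    · have : hexGraph.dist u v ≤ 2 := by
        simpa using SimpleGraph.dist_le (SimpleGraph.Walk.cons h1 (SimpleGraph.Walk.cons h2 SimpleGraph.Walk.nil))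
      exact this

lemma dichotomy (C : Set (ℤ × ℤ)) (u : ℤ × ℤ) (s : Finset (ℤ × ℤ)) (hpos : 0 < s.card)
    (hs : ↑s ⊆ I2 C u) :
    1 / ((I2 C u).ncard : ℝ) ≤ 1 / (s.card : ℝ) ∧
    (1 / ((I2 C u).ncard : ℝ) ≤ 1 / ((s.card : ℝ) + 1) ∨ I2 C u = ↑s) := by
  by_cases hfin : (I2 C u).Finite
  · have hle : s.card ≤ (I2 C u).ncard := by
      rw [← Set.ncard_coe_finset s]; exact Set.ncard_le_ncard hs hfin
    refine ⟨one_div_le_one_div_of_le (by exact_mod_cast hpos) (by exact_mod_cast hle), ?_⟩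
    rcases eq_or_lt_of_le hle with heq | hlt
    · exact Or.inr (Set.eq_of_subset_of_ncard_le hs (by rw [Set.ncard_coe_finset]; omega) hfin).symm
    · exact Or.inl (one_div_le_one_div_of_le (by positivity) (by exact_mod_cast hlt))
  · have h0 : (I2 C u).ncard = 0 := Set.Infinite.ncard hfin
    constructor
    · rw [h0]; push_cast; rw [div_zero]; positivity
    · left; rw [h0]; push_cast; rw [div_zero]; positivity

lemma pairB (C : Set (ℤ × ℤ)) (hC : isIdentifying2 C) (u v : ℤ × ℤ) (huv : u ≠ v)
    (s : Finset (ℤ × ℤ)) (hcard : s.card = 2)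
    (h1 : ↑s ⊆ I2 C u) (h2 : ↑s ⊆ I2 C v) :
    1 / ((I2 C u).ncard : ℝ) + 1 / ((I2 C v).ncard : ℝ) ≤ 5 / 6 := by
  obtain ⟨a1, b1⟩ := dichotomy C u s (by omega) h1
  obtain ⟨a2, b2⟩ := dichotomy C v s (by omega) h2
  rw [hcard] at a1 b1 a2 b2
  push_cast at a1 b1 a2 b2
  rcases b1 with b1 | e1
  · linarith
  · rcases b2 with b2 | e2
    · linarith
    · exact absurd (e1.trans e2.symm) ((hC u).2 v huv)

lemma quadB (C : Set (ℤ × ℤ)) (hC : isIdentifying2 C) (v0 v1 v2 v3 : ℤ × ℤ)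
    (h01 : v0 ≠ v1) (h02 : v0 ≠ v2) (h03 : v0 ≠ v3) (h12 : v1 ≠ v2) (h13 : v1 ≠ v3)
    (h23 : v2 ≠ v3) (s : Finset (ℤ × ℤ)) (hcard : s.card = 4)
    (hs0 : ↑s ⊆ I2 C v0) (hs1 : ↑s ⊆ I2 C v1) (hs2 : ↑s ⊆ I2 C v2) (hs3 : ↑s ⊆ I2 C v3) :
    1 / ((I2 C v0).ncard : ℝ) + 1 / ((I2 C v1).ncard : ℝ) + 1 / ((I2 C v2).ncard : ℝ)
      + 1 / ((I2 C v3).ncard : ℝ) ≤ 17 / 20 := by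
  obtain ⟨a0, b0⟩ := dichotomy C v0 s (by omega) hs0
  obtain ⟨a1, b1⟩ := dichotomy C v1 s (by omega) hs1
  obtain ⟨a2, b2⟩ := dichotomy C v2 s (by omega) hs2
  obtain ⟨a3, b3⟩ := dichotomy C v3 s (by omega) hs3
  rw [hcard] at a0 b0 a1 b1 a2 b2 a3 b3
  push_cast at a0 b0 a1 b1 a2 b2 a3 b3
  rcases b0 with b0 | e0 <;> rcases b1 with b1 | e1 <;> rcases b2 with b2 | e2 <;>
    rcases b3 with b3 | e3 <;>
    first
      | linarith
      | exact absurd (e0.trans e1.symm) ((hC v0).2 v1 h01)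
      | exact absurd (e0.trans e2.symm) ((hC v0).2 v2 h02)
      | exact absurd (e0.trans e3.symm) ((hC v0).2 v3 h03)
      | exact absurd (e1.trans e2.symm) ((hC v1).2 v2 h12)
      | exact absurd (e1.trans e3.symm) ((hC v1).2 v3 h13)
      | exact absurd (e2.trans e3.symm) ((hC v2).2 v3 h23)

theorem stmt8 (C : Set (ℤ × ℤ)) (hC : isIdentifying2 C) (c : ℤ × ℤ) (hc : c ∈ C)
    (hadj : ∀ v : ℤ × ℤ, hexGraph.Adj c v → v ∈ C) :
    share2 C c ≤ 67 / 20 := by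
  obtain ⟨a, b⟩ := c
  obtain ⟨e, he⟩ : ∃ e : ℤ, ((a + b) % 2 = 0 ∧ e = 1) ∨ ((a + b) % 2 ≠ 0 ∧ e = -1) := by
    by_cases h : (a + b) % 2 = 0
    · exact ⟨1, Or.inl ⟨h, rfl⟩⟩
    · exact ⟨-1, Or.inr ⟨h, rfl⟩⟩
  have hn1 : (a+1, b) ∈ C := hadj _ ((hexAdj _ _).mpr (by omega))
  have hn2 : (a-1, b) ∈ C := hadj _ ((hexAdj _ _).mpr (by omega))
  have hn3 : (a, b+e) ∈ C := hadj _ ((hexAdj _ _).mpr (by omega))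
  -- the quad subsets
  have hsA : (↑({(a,b),(a+1,b),(a-1,b),(a,b+e)} : Finset (ℤ×ℤ)) : Set (ℤ×ℤ)) ⊆ I2 C (a,b) := by
    intro x hx
    simp only [Finset.coe_insert, Set.mem_insert_iff, Finset.coe_singleton,
      Set.mem_singleton_iff] at hx
    obtain rfl | rfl | rfl | rfl := hx
    · exact ⟨(mem_hexBall2 _ _).mpr (Or.inl rfl), hc⟩
    · exact ⟨(mem_hexBall2 _ _).mpr (Or.inr (Or.inl ((hexAdj _ _).mpr (by omega)))), hn1⟩
    · exact ⟨(mem_hexBall2 _ _).mpr (Or.inr (Or.inl ((hexAdj _ _).mpr (by omega)))), hn2⟩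
    · exact ⟨(mem_hexBall2 _ _).mpr (Or.inr (Or.inl ((hexAdj _ _).mpr (by omega)))), hn3⟩
  have hsB : (↑({(a,b),(a+1,b),(a-1,b),(a,b+e)} : Finset (ℤ×ℤ)) : Set (ℤ×ℤ)) ⊆ I2 C (a+1,b) := by
    intro x hx
    simp only [Finset.coe_insert, Set.mem_insert_iff, Finset.coe_singleton,
      Set.mem_singleton_iff] at hx
    obtain rfl | rfl | rfl | rfl := hx
    · exact ⟨(mem_hexBall2 _ _).mpr (Or.inr (Or.inl ((hexAdj _ _).mpr (by omega)))), hc⟩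
    · exact ⟨(mem_hexBall2 _ _).mpr (Or.inl rfl), hn1⟩
    · exact ⟨(mem_hexBall2 _ _).mpr (Or.inr (Or.inr ⟨(a,b), (hexAdj _ _).mpr (by omega),
        (hexAdj _ _).mpr (by omega)⟩)), hn2⟩
    · exact ⟨(mem_hexBall2 _ _).mpr (Or.inr (Or.inr ⟨(a,b), (hexAdj _ _).mpr (by omega),
        (hexAdj _ _).mpr (by omega)⟩)), hn3⟩
  have hsC : (↑({(a,b),(a+1,b),(a-1,b),(a,b+e)} : Finset (ℤ×ℤ)) : Set (ℤ×ℤ)) ⊆ I2 C (a-1,b) := by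
    intro x hx
    simp only [Finset.coe_insert, Set.mem_insert_iff, Finset.coe_singleton,
      Set.mem_singleton_iff] at hx
    obtain rfl | rfl | rfl | rfl := hx
    · exact ⟨(mem_hexBall2 _ _).mpr (Or.inr (Or.inl ((hexAdj _ _).mpr (by omega)))), hc⟩
    · exact ⟨(mem_hexBall2 _ _).mpr (Or.inr (Or.inr ⟨(a,b), (hexAdj _ _).mpr (by omega),
        (hexAdj _ _).mpr (by omega)⟩)), hn1⟩
    · exact ⟨(mem_hexBall2 _ _).mpr (Or.inl rfl), hn2⟩
    · exact ⟨(mem_hexBall2 _ _).mpr (Or.inr (Or.inr ⟨(a,b), (hexAdj _ _).mpr (by omega),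
        (hexAdj _ _).mpr (by omega)⟩)), hn3⟩
  have hsD : (↑({(a,b),(a+1,b),(a-1,b),(a,b+e)} : Finset (ℤ×ℤ)) : Set (ℤ×ℤ)) ⊆ I2 C (a,b+e) := by
    intro x hx
    simp only [Finset.coe_insert, Set.mem_insert_iff, Finset.coe_singleton,
      Set.mem_singleton_iff] at hx
    obtain rfl | rfl | rfl | rfl := hx
    · exact ⟨(mem_hexBall2 _ _).mpr (Or.inr (Or.inl ((hexAdj _ _).mpr (by omega)))), hc⟩
    · exact ⟨(mem_hexBall2 _ _).mpr (Or.inr (Or.inr ⟨(a,b), (hexAdj _ _).mpr (by omega),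
        (hexAdj _ _).mpr (by omega)⟩)), hn1⟩
    · exact ⟨(mem_hexBall2 _ _).mpr (Or.inr (Or.inr ⟨(a,b), (hexAdj _ _).mpr (by omega),
        (hexAdj _ _).mpr (by omega)⟩)), hn2⟩
    · exact ⟨(mem_hexBall2 _ _).mpr (Or.inl rfl), hn3⟩
  have hcard4 : ({(a,b),(a+1,b),(a-1,b),(a,b+e)} : Finset (ℤ×ℤ)).card = 4 := by
    rw [Finset.card_insert_of_notMem (by simp only [Finset.mem_insert, Finset.mem_singleton, Prod.mk.injEq]; omega),
      Finset.card_insert_of_notMem (by simp only [Finset.mem_insert, Finset.mem_singleton, Prod.mk.injEq]; omega),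
      Finset.card_insert_of_notMem (by simp only [Finset.mem_insert, Finset.mem_singleton, Prod.mk.injEq]; omega), Finset.card_singleton]
  have hq := quadB C hC (a,b) (a+1,b) (a-1,b) (a,b+e)
    (by intro hh; rw [Prod.mk.injEq] at hh; omega)
    (by intro hh; rw [Prod.mk.injEq] at hh; omega)
    (by intro hh; rw [Prod.mk.injEq] at hh; omega)
    (by intro hh; rw [Prod.mk.injEq] at hh; omega)
    (by intro hh; rw [Prod.mk.injEq] at hh; omega)
    (by intro hh; rw [Prod.mk.injEq] at hh; omega)
    _ hcard4 hsA hsB hsC hsD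
  -- pair 1 : around (a+1,b)
  have hP1a : (↑({(a,b),(a+1,b)} : Finset (ℤ×ℤ)) : Set (ℤ×ℤ)) ⊆ I2 C (a+2,b) := by
    intro x hx
    simp only [Finset.coe_insert, Set.mem_insert_iff, Finset.coe_singleton,
      Set.mem_singleton_iff] at hx
    obtain rfl | rfl := hx
    · exact ⟨(mem_hexBall2 _ _).mpr (Or.inr (Or.inr ⟨(a+1,b), (hexAdj _ _).mpr (by omega),
        (hexAdj _ _).mpr (by omega)⟩)), hc⟩
    · exact ⟨(mem_hexBall2 _ _).mpr (Or.inr (Or.inl ((hexAdj _ _).mpr (by omega)))), hn1⟩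
  have hP1b : (↑({(a,b),(a+1,b)} : Finset (ℤ×ℤ)) : Set (ℤ×ℤ)) ⊆ I2 C (a+1,b-e) := by
    intro x hx
    simp only [Finset.coe_insert, Set.mem_insert_iff, Finset.coe_singleton,
      Set.mem_singleton_iff] at hx
    obtain rfl | rfl := hx
    · exact ⟨(mem_hexBall2 _ _).mpr (Or.inr (Or.inr ⟨(a+1,b), (hexAdj _ _).mpr (by omega),
        (hexAdj _ _).mpr (by omega)⟩)), hc⟩
    · exact ⟨(mem_hexBall2 _ _).mpr (Or.inr (Or.inl ((hexAdj _ _).mpr (by omega)))), hn1⟩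
  have hcard2a : ({(a,b),(a+1,b)} : Finset (ℤ×ℤ)).card = 2 := by
    rw [Finset.card_insert_of_notMem (by simp only [Finset.mem_insert, Finset.mem_singleton, Prod.mk.injEq]; omega), Finset.card_singleton]
  have hp1 := pairB C hC (a+2,b) (a+1,b-e)
    (by intro hh; rw [Prod.mk.injEq] at hh; omega) _ hcard2a hP1a hP1b
  -- pair 2 : around (a-1,b)
  have hP2a : (↑({(a,b),(a-1,b)} : Finset (ℤ×ℤ)) : Set (ℤ×ℤ)) ⊆ I2 C (a-2,b) := by
    intro x hx
    simp only [Finset.coe_insert, Set.mem_insert_iff, Finset.coe_singleton,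
      Set.mem_singleton_iff] at hx
    obtain rfl | rfl := hx
    · exact ⟨(mem_hexBall2 _ _).mpr (Or.inr (Or.inr ⟨(a-1,b), (hexAdj _ _).mpr (by omega),
        (hexAdj _ _).mpr (by omega)⟩)), hc⟩
    · exact ⟨(mem_hexBall2 _ _).mpr (Or.inr (Or.inl ((hexAdj _ _).mpr (by omega)))), hn2⟩
  have hP2b : (↑({(a,b),(a-1,b)} : Finset (ℤ×ℤ)) : Set (ℤ×ℤ)) ⊆ I2 C (a-1,b-e) := by
    intro x hx
    simp only [Finset.coe_insert, Set.mem_insert_iff, Finset.coe_singleton,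
      Set.mem_singleton_iff] at hx
    obtain rfl | rfl := hx
    · exact ⟨(mem_hexBall2 _ _).mpr (Or.inr (Or.inr ⟨(a-1,b), (hexAdj _ _).mpr (by omega),
        (hexAdj _ _).mpr (by omega)⟩)), hc⟩
    · exact ⟨(mem_hexBall2 _ _).mpr (Or.inr (Or.inl ((hexAdj _ _).mpr (by omega)))), hn2⟩
  have hcard2b : ({(a,b),(a-1,b)} : Finset (ℤ×ℤ)).card = 2 := by
    rw [Finset.card_insert_of_notMem (by simp only [Finset.mem_insert, Finset.mem_singleton, Prod.mk.injEq]; omega), Finset.card_singleton]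
  have hp2 := pairB C hC (a-2,b) (a-1,b-e)
    (by intro hh; rw [Prod.mk.injEq] at hh; omega) _ hcard2b hP2a hP2b
  -- pair 3 : around (a,b+e)
  have hP3a : (↑({(a,b),(a,b+e)} : Finset (ℤ×ℤ)) : Set (ℤ×ℤ)) ⊆ I2 C (a+1,b+e) := by
    intro x hx
    simp only [Finset.coe_insert, Set.mem_insert_iff, Finset.coe_singleton,
      Set.mem_singleton_iff] at hx
    obtain rfl | rfl := hx
    · exact ⟨(mem_hexBall2 _ _).mpr (Or.inr (Or.inr ⟨(a,b+e), (hexAdj _ _).mpr (by omega),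
        (hexAdj _ _).mpr (by omega)⟩)), hc⟩
    · exact ⟨(mem_hexBall2 _ _).mpr (Or.inr (Or.inl ((hexAdj _ _).mpr (by omega)))), hn3⟩
  have hP3b : (↑({(a,b),(a,b+e)} : Finset (ℤ×ℤ)) : Set (ℤ×ℤ)) ⊆ I2 C (a-1,b+e) := by
    intro x hx
    simp only [Finset.coe_insert, Set.mem_insert_iff, Finset.coe_singleton,
      Set.mem_singleton_iff] at hx
    obtain rfl | rfl := hx
    · exact ⟨(mem_hexBall2 _ _).mpr (Or.inr (Or.inr ⟨(a,b+e), (hexAdj _ _).mpr (by omega),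
        (hexAdj _ _).mpr (by omega)⟩)), hc⟩
    · exact ⟨(mem_hexBall2 _ _).mpr (Or.inr (Or.inl ((hexAdj _ _).mpr (by omega)))), hn3⟩
  have hcard2c : ({(a,b),(a,b+e)} : Finset (ℤ×ℤ)).card = 2 := by
    rw [Finset.card_insert_of_notMem (by simp only [Finset.mem_insert, Finset.mem_singleton, Prod.mk.injEq]; omega), Finset.card_singleton]
  have hp3 := pairB C hC (a+1,b+e) (a-1,b+e)
    (by intro hh; rw [Prod.mk.injEq] at hh; omega) _ hcard2c hP3a hP3b
  -- the ball is the explicit 10 point set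
  have hS : hexBall 2 (a,b) = (↑({(a,b),(a+1,b),(a-1,b),(a,b+e),(a+2,b),(a+1,b-e),(a-2,b),
      (a-1,b-e),(a+1,b+e),(a-1,b+e)} : Finset (ℤ×ℤ)) : Set (ℤ×ℤ)) := by
    ext ⟨x, y⟩
    simp only [Finset.coe_insert, Set.mem_insert_iff, Finset.coe_singleton,
      Set.mem_singleton_iff, Prod.mk.injEq]
    constructor
    · intro h
      rcases (mem_hexBall2 _ _).mp h with heq | h1 | ⟨⟨w1, w2⟩, h1, h2⟩
      · rw [Prod.mk.injEq] at heq
        exact Or.inl (by omega)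
      · rw [hexAdj] at h1
        simp only at h1
        rcases h1 with ⟨h1a, h1b | h1b⟩ | ⟨h1a, ⟨h1c, h1d⟩ | ⟨h1c, h1d⟩⟩ <;>
          first
            | exact Or.inl (by omega)
            | exact Or.inr (Or.inl (by omega))
            | exact Or.inr (Or.inr (Or.inl (by omega)))
            | exact Or.inr (Or.inr (Or.inr (Or.inl (by omega))))
            | (exfalso; omega)
      · rw [hexAdj] at h1 h2
        simp only at h1 h2
        rcases h1 with ⟨h1a, h1b | h1b⟩ | ⟨h1a, ⟨h1c, h1d⟩ | ⟨h1c, h1d⟩⟩ <;>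
          rcases h2 with ⟨h2a, h2b | h2b⟩ | ⟨h2a, ⟨h2c, h2d⟩ | ⟨h2c, h2d⟩⟩ <;>
          first
            | exact Or.inl (by omega)
            | exact Or.inr (Or.inl (by omega))
            | exact Or.inr (Or.inr (Or.inl (by omega)))
            | exact Or.inr (Or.inr (Or.inr (Or.inl (by omega))))
            | exact Or.inr (Or.inr (Or.inr (Or.inr (Or.inl (by omega)))))
            | exact Or.inr (Or.inr (Or.inr (Or.inr (Or.inr (Or.inl (by omega))))))
            | exact Or.inr (Or.inr (Or.inr (Or.inr (Or.inr (Or.inr (Or.inl (by omega)))))))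
            | exact Or.inr (Or.inr (Or.inr (Or.inr (Or.inr (Or.inr (Or.inr (Or.inl (by omega))))))))
            | exact Or.inr (Or.inr (Or.inr (Or.inr (Or.inr (Or.inr (Or.inr (Or.inr (Or.inl (by omega)))))))))
            | exact Or.inr (Or.inr (Or.inr (Or.inr (Or.inr (Or.inr (Or.inr (Or.inr (Or.inr (by omega)))))))))
            | (exfalso; omega)
    · intro hx
      refine (mem_hexBall2 _ _).mpr ?_
      rcases hx with ⟨hx1,hx2⟩|⟨hx1,hx2⟩|⟨hx1,hx2⟩|⟨hx1,hx2⟩|⟨hx1,hx2⟩|⟨hx1,hx2⟩|⟨hx1,hx2⟩|⟨hx1,hx2⟩|⟨hx1,hx2⟩|⟨hx1,hx2⟩ <;>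
        first
          | exact Or.inl (by rw [Prod.mk.injEq]; omega)
          | exact Or.inr (Or.inl ((hexAdj _ _).mpr (by omega)))
          | exact Or.inr (Or.inr ⟨(a+1,b), (hexAdj _ _).mpr (by omega), (hexAdj _ _).mpr (by omega)⟩)
          | exact Or.inr (Or.inr ⟨(a-1,b), (hexAdj _ _).mpr (by omega), (hexAdj _ _).mpr (by omega)⟩)
          | exact Or.inr (Or.inr ⟨(a,b+e), (hexAdj _ _).mpr (by omega), (hexAdj _ _).mpr (by omega)⟩)
  have hsum : share2 C (a,b) = ∑ u ∈ ({(a,b),(a+1,b),(a-1,b),(a,b+e),(a+2,b),(a+1,b-e),(a-2,b),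
      (a-1,b-e),(a+1,b+e),(a-1,b+e)} : Finset (ℤ×ℤ)), 1 / ((I2 C u).ncard : ℝ) := by
    unfold share2
    rw [hS]
    exact Finset.tsum_subtype' _ (fun u => 1 / ((I2 C u).ncard : ℝ))
  rw [hsum]
  rw [Finset.sum_insert (by simp only [Finset.mem_insert, Finset.mem_singleton, Prod.mk.injEq]; omega), Finset.sum_insert (by simp only [Finset.mem_insert, Finset.mem_singleton, Prod.mk.injEq]; omega),
    Finset.sum_insert (by simp only [Finset.mem_insert, Finset.mem_singleton, Prod.mk.injEq]; omega), Finset.sum_insert (by simp only [Finset.mem_insert, Finset.mem_singleton, Prod.mk.injEq]; omega),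
    Finset.sum_insert (by simp only [Finset.mem_insert, Finset.mem_singleton, Prod.mk.injEq]; omega), Finset.sum_insert (by simp only [Finset.mem_insert, Finset.mem_singleton, Prod.mk.injEq]; omega),
    Finset.sum_insert (by simp only [Finset.mem_insert, Finset.mem_singleton, Prod.mk.injEq]; omega), Finset.sum_insert (by simp only [Finset.mem_insert, Finset.mem_singleton, Prod.mk.injEq]; omega),
    Finset.sum_insert (by simp only [Finset.mem_insert, Finset.mem_singleton, Prod.mk.injEq]; omega), Finset.sum_singleton]
  linarith [hq, hp1, hp2, hp3]
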